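/- Let sequences $(\eta_s)_{s\ge 1}$ of nonnegative reals satisfy $\eta_1 = 1$ and, for $s > 1$, $\eta_s \le C^{s-1} + 2(s+2)A \sum_{j=1}^{s-1} \eta_j \eta_{s-j}$, where $A > 0$ and $C \ge 0$ are constants. Fix $r \ge 1$. Then for all $1 \le s \le r$ one has $\eta_s \le (C + 2(r+2)A)^{s-1} \mu_s$, where $\mu_1 = 1$ and $\mu_s = \sum_{j=1}^{s-1} \mu_j \mu_{s-j}$; consequently $\eta_s \le B_r^{s-1}/s$ with $B_r = 4C + 8(r+2)A$. -/

import Mathlib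

open Finset

lemma centralBinom_le_four_pow (n : ℕ) : Nat.centralBinom n ≤ 4 ^ n := by
  have h : (2 * n).choose n ≤ ∑ i ∈ range (2 * n + 1), (2 * n).choose i :=
    single_le_sum (fun x _ => Nat.zero_le _) (by simp; omega)
  rw [Nat.sum_range_choose] at h
  calc Nat.centralBinom n = (2 * n).choose n := Nat.centralBinom_eq_two_mul_choose n
    _ ≤ 2 ^ (2 * n) := h
    _ = 4 ^ n := by rw [pow_mul]; norm_num

theorem eta_sequence_bound (A C : ℝ) (hA : 0 < A) (hC : 0 ≤ C)
    (η : ℕ → ℝ) (hηnn : ∀ s, 0 ≤ η s) (hη1 : η 1 = 1)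
    (hηrec : ∀ s, 2 ≤ s →
      η s ≤ C ^ (s - 1) + 2 * (s + 2) * A * ∑ j ∈ Finset.Ico 1 s, η j * η (s - j))
    (μ : ℕ → ℝ) (hμ1 : μ 1 = 1)
    (hμrec : ∀ s, 2 ≤ s → μ s = ∑ j ∈ Finset.Ico 1 s, μ j * μ (s - j))
    (r : ℕ) (hr : 1 ≤ r) :
    ∀ s, 1 ≤ s → s ≤ r →
      η s ≤ (C + 2 * (r + 2) * A) ^ (s - 1) * μ s ∧
      η s ≤ (4 * C + 8 * (r + 2) * A) ^ (s - 1) / s := by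
  set D := C + 2 * (r + 2) * A with hD
  have hrA : 0 < 2 * (r + 2) * A := by positivity
  have hDpos : 0 < D := by positivity
  -- μ equals catalan numbers
  have hμcat : ∀ s, 1 ≤ s → μ s = (catalan (s - 1) : ℝ) := by
    intro s
    induction s using Nat.strong_induction_on with
    | _ s ih =>
      intro hs1
      rcases eq_or_lt_of_le hs1 with h1 | h2
      · simp [← h1, hμ1]
      · rw [hμrec s h2]
        obtain ⟨n, rfl⟩ : ∃ n, s = n + 2 := ⟨s - 2, by omega⟩
        show _ = ((catalan (n + 1) : ℕ) : ℝ)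
        rw [catalan_succ' n]
        push_cast
        rw [Finset.Nat.sum_antidiagonal_eq_sum_range_succ
          (fun x y => (catalan x : ℝ) * (catalan y : ℝ)) n]
        rw [show Finset.Ico 1 (n + 2) = Finset.map ⟨fun i => i + 1, add_left_injective 1⟩
          (Finset.range (n + 1)) from ?_]
        · rw [Finset.sum_map]
          apply Finset.sum_congr rfl
          intro i hi
          simp only [Function.Embedding.coeFn_mk, Finset.mem_range] at hi ⊢
          rw [ih (i + 1) (by omega) (by omega), ih (n + 2 - (i + 1)) (by omega) (by omega),
            show i + 1 - 1 = i from by omega, show n + 2 - (i + 1) - 1 = n - i from by omega]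
        · ext x
          simp only [Finset.mem_Ico, Finset.mem_map, Finset.mem_range,
            Function.Embedding.coeFn_mk]
          constructor
          · rintro ⟨h1, h2⟩; exact ⟨x - 1, by omega, by omega⟩
          · rintro ⟨a, ha, rfl⟩; omega
  have hμone : ∀ s, 1 ≤ s → (1 : ℝ) ≤ μ s := by
    intro s hs
    rw [hμcat s hs]
    have h := succ_mul_catalan_eq_centralBinom (s - 1)
    have h2 := Nat.centralBinom_pos (s - 1)
    have hpos : 0 < catalan (s - 1) :=
      Nat.pos_of_ne_zero fun hz => by simp [hz] at h; omega
    exact_mod_cast hpos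
  have hμnn : ∀ s, 1 ≤ s → (0 : ℝ) ≤ μ s := fun s hs => le_trans zero_le_one (hμone s hs)
  -- main induction
  have main : ∀ s, 1 ≤ s → s ≤ r → η s ≤ D ^ (s - 1) * μ s := by
    intro s
    induction s using Nat.strong_induction_on with
    | _ s ih =>
      intro hs1 hsr
      rcases eq_or_lt_of_le hs1 with h1 | h2
      · simp [← h1, hη1, hμ1]
      · have step : η s ≤ C ^ (s - 1) + 2 * (s + 2) * A * ∑ j ∈ Finset.Ico 1 s,
            η j * η (s - j) := hηrec s h2
        have sumnn : (0 : ℝ) ≤ ∑ j ∈ Finset.Ico 1 s, η j * η (s - j) :=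
          Finset.sum_nonneg fun j _ => mul_nonneg (hηnn j) (hηnn _)
        have hcoef : 2 * ((s : ℝ) + 2) * A ≤ 2 * ((r : ℝ) + 2) * A := by
          have : (s : ℝ) ≤ r := by exact_mod_cast hsr
          nlinarith
        have sumle : ∑ j ∈ Finset.Ico 1 s, η j * η (s - j)
            ≤ D ^ (s - 2) * ∑ j ∈ Finset.Ico 1 s, μ j * μ (s - j) := by
          rw [Finset.mul_sum]
          apply Finset.sum_le_sum
          intro j hj
          simp only [Finset.mem_Ico] at hj
          have h1j : η j ≤ D ^ (j - 1) * μ j := ih j (by omega) hj.1 (by omega)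
          have h2j : η (s - j) ≤ D ^ (s - j - 1) * μ (s - j) :=
            ih (s - j) (by omega) (by omega) (by omega)
          calc η j * η (s - j) ≤ (D ^ (j - 1) * μ j) * (D ^ (s - j - 1) * μ (s - j)) := by
                apply mul_le_mul h1j h2j (hηnn _)
                exact mul_nonneg (pow_nonneg hDpos.le _) (hμnn j hj.1)
            _ = D ^ ((j - 1) + (s - j - 1)) * (μ j * μ (s - j)) := by rw [pow_add]; ring
            _ = D ^ (s - 2) * (μ j * μ (s - j)) := by congr 2; omega
        have hμs : μ s = ∑ j ∈ Finset.Ico 1 s, μ j * μ (s - j) := hμrec s h2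
        have hCD : C ^ (s - 1) ≤ C * D ^ (s - 2) := by
          obtain ⟨n, rfl⟩ : ∃ n, s = n + 2 := ⟨s - 2, by omega⟩
          simp only [Nat.add_sub_cancel, show n + 2 - 1 = n + 1 from rfl, pow_succ']
          exact mul_le_mul_of_nonneg_left
            (pow_le_pow_left₀ hC (by simp [hD]; nlinarith) n) hC
        have hμs1 : (1 : ℝ) ≤ μ s := hμone s hs1
        have hDs2 : (0 : ℝ) ≤ D ^ (s - 2) := pow_nonneg hDpos.le _
        calc η s ≤ C ^ (s - 1) + 2 * (s + 2) * A * ∑ j ∈ Finset.Ico 1 s, η j * η (s - j) :=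
              step
          _ ≤ C * D ^ (s - 2) + 2 * ((r : ℝ) + 2) * A *
              (D ^ (s - 2) * ∑ j ∈ Finset.Ico 1 s, μ j * μ (s - j)) := by
            apply add_le_add hCD
            calc 2 * ((s : ℝ) + 2) * A * ∑ j ∈ Finset.Ico 1 s, η j * η (s - j)
                ≤ 2 * ((r : ℝ) + 2) * A * ∑ j ∈ Finset.Ico 1 s, η j * η (s - j) :=
                  mul_le_mul_of_nonneg_right hcoef sumnn
              _ ≤ 2 * ((r : ℝ) + 2) * A *
                  (D ^ (s - 2) * ∑ j ∈ Finset.Ico 1 s, μ j * μ (s - j)) :=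
                  mul_le_mul_of_nonneg_left sumle hrA.le
          _ = C * D ^ (s - 2) + 2 * ((r : ℝ) + 2) * A * (D ^ (s - 2) * μ s) := by rw [← hμs]
          _ ≤ D ^ (s - 1) * μ s := by
            obtain ⟨n, rfl⟩ : ∃ n, s = n + 2 := ⟨s - 2, by omega⟩
            simp only [Nat.add_sub_cancel, show n + 2 - 1 = n + 1 from rfl, pow_succ]
            have key : D ^ n * C ≤ D ^ n * (C * μ (n + 2)) :=
              mul_le_mul_of_nonneg_left (le_mul_of_one_le_right hC hμs1)
                (pow_nonneg hDpos.le n)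
            have expand : D ^ n * D * μ (n + 2) =
                D ^ n * (C * μ (n + 2)) + 2 * ((r : ℝ) + 2) * A * (D ^ n * μ (n + 2)) := by
              rw [hD]; ring
            linarith
  -- conclude
  intro s hs1 hsr
  refine ⟨main s hs1 hsr, ?_⟩
  have hcat : (catalan (s - 1) : ℝ) ≤ 4 ^ (s - 1) / s := by
    rw [div_eq_inv_mul, le_inv_mul_iff₀ (by exact_mod_cast hs1 : (0:ℝ) < (s:ℝ))]
    have h1 : (s : ℕ) * catalan (s - 1) = Nat.centralBinom (s - 1) := by
      have := succ_mul_catalan_eq_centralBinom (s - 1)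
      rwa [show s - 1 + 1 = s from by omega] at this
    have h2 : Nat.centralBinom (s - 1) ≤ 4 ^ (s - 1) := centralBinom_le_four_pow _
    calc ((s : ℝ) * catalan (s - 1)) = ((s * catalan (s - 1) : ℕ) : ℝ) := by push_cast; ring
      _ = (Nat.centralBinom (s - 1) : ℝ) := by rw [h1]
      _ ≤ ((4 ^ (s - 1) : ℕ) : ℝ) := by exact_mod_cast h2
      _ = 4 ^ (s - 1) := by push_cast; ring
  calc η s ≤ D ^ (s - 1) * μ s := main s hs1 hsr
    _ = D ^ (s - 1) * (catalan (s - 1) : ℝ) := by rw [hμcat s hs1]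
    _ ≤ D ^ (s - 1) * (4 ^ (s - 1) / s) :=
        mul_le_mul_of_nonneg_left hcat (pow_nonneg hDpos.le _)
    _ = (4 * D) ^ (s - 1) / s := by rw [mul_pow]; ring
    _ = (4 * C + 8 * (r + 2) * A) ^ (s - 1) / s := by rw [hD]; ring_nf
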